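/- Let B be a symmetric n×n matrix with simple spectrum whose eigenvectors all have nonzero inner product with 𝟙. Then the only matrix Q satisfying Q𝟙 = 𝟙 and QB = BQ is the identity matrix. -/

import Mathlib

open Matrix

def HasSimpleSpectrum {n : ℕ} (A : Matrix (Fin n) (Fin n) ℝ) : Prop :=
  ∀ μ : ℝ, Module.finrank ℝ (Module.End.eigenspace (Matrix.toLin' A) μ) ≤ 1

def IsEigenvector {n : ℕ} (A : Matrix (Fin n) (Fin n) ℝ) (u : Fin n → ℝ) : Prop :=
  u ≠ 0 ∧ ∃ μ : ℝ, A.mulVec u = μ • u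

theorem stmt_8 {n : ℕ} (B : Matrix (Fin n) (Fin n) ℝ) (hB : B.IsSymm)
    (hsimple : HasSimpleSpectrum B)
    (hfriendly : ∀ u : Fin n → ℝ, IsEigenvector B u → ∑ i, u i ≠ 0)
    (Q : Matrix (Fin n) (Fin n) ℝ)
    (hstoch : Q.mulVec (fun _ => 1) = fun _ => 1)
    (hcomm : Q * B = B * Q) : Q = 1 := by
  have hH : B.IsHermitian := by
    rwa [Matrix.IsHermitian, Matrix.conjTranspose_eq_transpose_of_trivial]
  -- Qᵀ commutes with B
  have hcommT : Qᵀ * B = B * Qᵀ := by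
    calc Qᵀ * B = Qᵀ * Bᵀ := by rw [hB]
    _ = (B * Q)ᵀ := by rw [Matrix.transpose_mul]
    _ = (Q * B)ᵀ := by rw [hcomm]
    _ = Bᵀ * Qᵀ := by rw [Matrix.transpose_mul]
    _ = B * Qᵀ := by rw [hB]
  -- key: Qᵀ fixes every eigenvector of B
  have key : ∀ u : Fin n → ℝ, IsEigenvector B u → Qᵀ.mulVec u = u := by
    rintro u ⟨hu0, μ, hμ⟩
    have hQu : B.mulVec (Qᵀ.mulVec u) = μ • Qᵀ.mulVec u := by
      rw [Matrix.mulVec_mulVec, ← hcommT, ← Matrix.mulVec_mulVec, hμ, Matrix.mulVec_smul]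
    set W := Module.End.eigenspace (Matrix.toLin' B) μ with hW
    have huW : u ∈ W := by
      rw [Module.End.mem_eigenspace_iff, Matrix.toLin'_apply, hμ]
    have hQuW : Qᵀ.mulVec u ∈ W := by
      rw [Module.End.mem_eigenspace_iff, Matrix.toLin'_apply, hQu]
    have hspan : Submodule.span ℝ {u} = W := by
      apply Submodule.eq_of_le_of_finrank_le
      · rw [Submodule.span_le, Set.singleton_subset_iff]; exact huW
      · rw [finrank_span_singleton hu0]
        exact hsimple μ
    have : Qᵀ.mulVec u ∈ Submodule.span ℝ {u} := hspan ▸ hQuW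
    obtain ⟨c, hc⟩ := Submodule.mem_span_singleton.mp this
    have hsum : ∑ i, (Qᵀ.mulVec u) i = ∑ i, u i := by
      simp only [Matrix.mulVec, dotProduct, Matrix.transpose_apply]
      rw [Finset.sum_comm]
      refine Finset.sum_congr rfl fun j _ => ?_
      have := congrFun hstoch j
      simp only [Matrix.mulVec, dotProduct, mul_one] at this
      rw [← Finset.sum_mul]
      rw [show (∑ i, Q j i) = 1 from this, one_mul]
    have hcu : c = 1 := by
      have h2 : c * ∑ i, u i = ∑ i, u i := by
        calc c * ∑ i, u i = ∑ i, (c • u) i := by rw [Finset.mul_sum]; simp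
        _ = ∑ i, (Qᵀ *ᵥ u) i := by rw [hc]
        _ = ∑ i, u i := hsum
      have h3 : c * ∑ i, u i = 1 * ∑ i, u i := by rw [one_mul, h2]
      exact mul_right_cancel₀ (hfriendly u ⟨hu0, μ, hμ⟩) h3
    rw [← hc, hcu, one_smul]
  -- conclude Qᵀ = 1 using the eigenvector basis
  have hQT : Qᵀ = 1 := by
    apply Matrix.toLin'.injective
    refine Module.Basis.ext (hH.eigenvectorBasis.toBasis.map (WithLp.linearEquiv 2 ℝ (Fin n → ℝ))) fun i => ?_
    have := key (⇑(hH.eigenvectorBasis i))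
      ⟨(WithLp.linearEquiv 2 ℝ (Fin n → ℝ)).map_ne_zero_iff.mpr (hH.eigenvectorBasis.orthonormal.ne_zero i), hH.eigenvalues i, hH.mulVec_eigenvectorBasis i⟩
    simpa [Matrix.toLin'_apply, WithLp.coe_linearEquiv] using this
  calc Q = Qᵀᵀ := (Matrix.transpose_transpose Q).symm
  _ = (1 : Matrix (Fin n) (Fin n) ℝ)ᵀ := by rw [hQT]
  _ = 1 := Matrix.transpose_one
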